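/- Recursive mixture-weight update (Eq. 6 of the paper, proved in the appendix): for every time t, every action sequence a₀,…,a_t, every observation sequence o₁,…,o_{t+1} and every state sequence s₀,…,s_{t+1} such that the full history H_{t+1} has nonzero probability, the mixture weight satisfies p(s_{0:t+1} | h_{t+1}) = p(s_{0:t} | h_t) · p(s_{t+1}, o_{t+1} | H_t, a_t) / p(o_{t+1} | h_t, a_t), where p(o_{t+1} | h_t, a_t) = [∑_{D, s_{0:t+1}} P(D, H_{t+1})] / [∑_{D, s_{0:t}} P(D, H_t)]. -/

import Mathlib

open scoped ENNReal BigOperators Classical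

variable {S A O 𝔇 : Type*}
  [Fintype S] [Nonempty S] [Fintype A] [Nonempty A] [Fintype O] [Nonempty O]
  [Fintype 𝔇]

/-- Joint probability `P(D, H_t)` of a dynamics model `D` together with a full
history `H_t = (s₀,a₀,s₁,o₁,…,a_{t-1},s_t,o_t)`:
`P(D,H_t) = p_𝔇(D) · p₀(s₀) · ∏_{i=0}^{t-1} D(s_{i+1},o_{i+1} | s_i,a_i)`.
Here `s i` is `s_i`, `a i` is `a_i` and `o i` is `o_{i+1}`. -/
noncomputable def jointP (p𝔇 : PMF 𝔇) (p₀ : PMF S)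
    (dyn : 𝔇 → S → A → PMF (S × O)) (t : ℕ)
    (D : 𝔇) (s : Fin (t + 1) → S) (a : Fin t → A) (o : Fin t → O) : ℝ≥0∞ :=
  p𝔇 D * p₀ (s 0) * ∏ i : Fin t, dyn D (s i.castSucc) (a i) (s i.succ, o i)

/-- Probability of the observable history `h_t = (a₀,o₁,…,a_{t-1},o_t)`:
the joint marginalized over the dynamics model and the state sequence. -/
noncomputable def histP (p𝔇 : PMF 𝔇) (p₀ : PMF S)
    (dyn : 𝔇 → S → A → PMF (S × O)) (t : ℕ)
    (a : Fin t → A) (o : Fin t → O) : ℝ≥0∞ :=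
  ∑ D : 𝔇, ∑ s : Fin (t + 1) → S, jointP p𝔇 p₀ dyn t D s a o

/-- The belief `p(D, s_t | h_t)` over the dynamics model and current state given
the observable history. -/
noncomputable def belief (p𝔇 : PMF 𝔇) (p₀ : PMF S)
    (dyn : 𝔇 → S → A → PMF (S × O)) (t : ℕ)
    (a : Fin t → A) (o : Fin t → O) (D : 𝔇) (st : S) : ℝ≥0∞ :=
  (∑ s : Fin t → S, jointP p𝔇 p₀ dyn t D (Fin.snoc s st) a o) /
    histP p𝔇 p₀ dyn t a o

/-- The mixture weight `p(s_{0:t} | h_t)`: posterior of a state sequence given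
the observable history. -/
noncomputable def seqPost (p𝔇 : PMF 𝔇) (p₀ : PMF S)
    (dyn : 𝔇 → S → A → PMF (S × O)) (t : ℕ)
    (a : Fin t → A) (o : Fin t → O) (s : Fin (t + 1) → S) : ℝ≥0∞ :=
  (∑ D : 𝔇, jointP p𝔇 p₀ dyn t D s a o) / histP p𝔇 p₀ dyn t a o

/-- The model posterior `p(D | H_t)` given a full history. -/
noncomputable def modelPost (p𝔇 : PMF 𝔇) (p₀ : PMF S)
    (dyn : 𝔇 → S → A → PMF (S × O)) (t : ℕ)
    (s : Fin (t + 1) → S) (a : Fin t → A) (o : Fin t → O) (D : 𝔇) : ℝ≥0∞ :=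
  jointP p𝔇 p₀ dyn t D s a o / ∑ D' : 𝔇, jointP p𝔇 p₀ dyn t D' s a o

/-- The one-step predictive `p(s_{t+1}, o_{t+1} | H_t, a_t)
= ∑_D P(D,H_{t+1}) / ∑_D P(D,H_t)` where `H_{t+1} = (H_t,a_t,s_{t+1},o_{t+1})`. -/
noncomputable def predBRL (p𝔇 : PMF 𝔇) (p₀ : PMF S)
    (dyn : 𝔇 → S → A → PMF (S × O)) (t : ℕ)
    (s : Fin (t + 1) → S) (a : Fin t → A) (o : Fin t → O)
    (act : A) (s' : S) (o' : O) : ℝ≥0∞ :=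
  (∑ D : 𝔇,
      jointP p𝔇 p₀ dyn (t + 1) D (Fin.snoc s s') (Fin.snoc a act) (Fin.snoc o o')) /
    ∑ D : 𝔇, jointP p𝔇 p₀ dyn t D s a o

lemma jointP_succ (p𝔇 : PMF 𝔇) (p₀ : PMF S)
    (dyn : 𝔇 → S → A → PMF (S × O)) (t : ℕ) (D : 𝔇)
    (seq : Fin (t + 1) → S) (s' : S) (a : Fin (t + 1) → A) (o : Fin (t + 1) → O) :
    jointP p𝔇 p₀ dyn (t + 1) D (Fin.snoc seq s') a o =
      jointP p𝔇 p₀ dyn t D seq (fun i => a i.castSucc) (fun i => o i.castSucc) *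
        dyn D (seq (Fin.last t)) (a (Fin.last t)) (s', o (Fin.last t)) := by
  unfold jointP
  rw [Fin.prod_univ_castSucc]
  have h0 : (Fin.snoc seq s' : Fin (t + 2) → S) 0 = seq 0 := by
    have : (0 : Fin (t + 2)) = Fin.castSucc 0 := rfl
    rw [this, Fin.snoc_castSucc]
  simp only [h0, Fin.snoc_last, Fin.succ_castSucc, Fin.snoc_castSucc, Fin.succ_last]
  ring

lemma jointP_le_one (p𝔇 : PMF 𝔇) (p₀ : PMF S)
    (dyn : 𝔇 → S → A → PMF (S × O)) (t : ℕ)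
    (D : 𝔇) (s : Fin (t + 1) → S) (a : Fin t → A) (o : Fin t → O) :
    jointP p𝔇 p₀ dyn t D s a o ≤ 1 := by
  unfold jointP
  have h1 : p𝔇 D * p₀ (s 0) ≤ 1 := mul_le_one' (p𝔇.coe_le_one D) (p₀.coe_le_one (s 0))
  exact mul_le_one' h1 (Finset.prod_le_one (fun _ _ => zero_le)
    (fun i _ => PMF.coe_le_one _ _))

lemma ennreal_div_arith (x y n h : ℝ≥0∞) (hn : n ≠ 0) (hn' : n ≠ ⊤) (hh : h ≠ 0)
    (hh' : h ≠ ⊤) (hy : y ≠ 0) : x / y = (n / h * (x / n)) / (y / h) := by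
  have e1 : n / h * (x / n) = x / h := by
    rw [mul_comm, div_eq_mul_inv n h, ← mul_assoc, ENNReal.div_mul_cancel hn hn',
      ← div_eq_mul_inv]
  have e2 : (x / h) / (y / h) = x / y := by
    rw [div_eq_mul_inv x h, div_eq_mul_inv, ENNReal.inv_div (Or.inl hh') (Or.inl hh),
      mul_assoc, div_eq_mul_inv h y, ← mul_assoc h⁻¹, mul_comm h⁻¹ h,
      ENNReal.mul_inv_cancel hh hh', one_mul, ← div_eq_mul_inv]
  rw [e1, e2]

/-- **Recursive mixture-weight update (Eq. 6).** For every time `t`, actions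
`a₀,…,a_t`, observations `o₁,…,o_{t+1}` and state sequence `s₀,…,s_{t+1}` such
that the full history `H_{t+1}` has nonzero probability:
`p(s_{0:t+1}|h_{t+1}) = p(s_{0:t}|h_t) · p(s_{t+1},o_{t+1}|H_t,a_t) /
p(o_{t+1}|h_t,a_t)`, where
`p(o_{t+1}|h_t,a_t) = [∑_{D,s_{0:t+1}} P(D,H_{t+1})] / [∑_{D,s_{0:t}} P(D,H_t)]`. -/
theorem recursive_mixture_weight_update (p𝔇 : PMF 𝔇) (p₀ : PMF S)
    (dyn : 𝔇 → S → A → PMF (S × O)) (t : ℕ)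
    (a : Fin (t + 1) → A) (o : Fin (t + 1) → O)
    (seq : Fin (t + 1) → S) (s' : S)
    (hH : (∑ D : 𝔇, jointP p𝔇 p₀ dyn (t + 1) D (Fin.snoc seq s') a o) ≠ 0) :
    seqPost p𝔇 p₀ dyn (t + 1) a o (Fin.snoc seq s') =
      seqPost p𝔇 p₀ dyn t (fun i => a i.castSucc) (fun i => o i.castSucc) seq *
        predBRL p𝔇 p₀ dyn t seq (fun i => a i.castSucc) (fun i => o i.castSucc)
          (a (Fin.last t)) s' (o (Fin.last t)) /
        (histP p𝔇 p₀ dyn (t + 1) a o /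
          histP p𝔇 p₀ dyn t (fun i => a i.castSucc) (fun i => o i.castSucc)) := by
  set a' : Fin t → A := fun i => a i.castSucc with ha'
  set o' : Fin t → O := fun i => o i.castSucc with ho'
  set N1 : ℝ≥0∞ := ∑ D : 𝔇, jointP p𝔇 p₀ dyn (t + 1) D (Fin.snoc seq s') a o with hN1
  set N0 : ℝ≥0∞ := ∑ D : 𝔇, jointP p𝔇 p₀ dyn t D seq a' o' with hN0
  set H1 : ℝ≥0∞ := histP p𝔇 p₀ dyn (t + 1) a o with hH1
  set H0 : ℝ≥0∞ := histP p𝔇 p₀ dyn t a' o' with hH0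
  -- N0 ≠ 0
  have hN0ne : N0 ≠ 0 := by
    intro h0
    apply hH
    show (∑ D : 𝔇, jointP p𝔇 p₀ dyn (t + 1) D (Fin.snoc seq s') a o) = 0
    refine Finset.sum_eq_zero fun D _ => ?_
    have hz : jointP p𝔇 p₀ dyn t D seq a' o' = 0 :=
      (Finset.sum_eq_zero_iff.mp
        (show (∑ D : 𝔇, jointP p𝔇 p₀ dyn t D seq a' o') = 0 from h0)) D (Finset.mem_univ D)
    rw [jointP_succ, ← ha', ← ho', hz, zero_mul]
  -- finiteness
  have hsumlt : ∀ (u : ℕ) (aa : Fin u → A) (oo : Fin u → O),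
      histP p𝔇 p₀ dyn u aa oo ≠ ⊤ := by
    intro u aa oo
    refine (ENNReal.sum_lt_top.mpr fun D _ => ?_).ne
    refine ENNReal.sum_lt_top.mpr fun s _ => ?_
    exact lt_of_le_of_lt (jointP_le_one _ _ _ _ _ _ _ _) ENNReal.one_lt_top
  have hN0top : N0 ≠ ⊤ := by
    refine (ENNReal.sum_lt_top.mpr fun D _ => ?_).ne
    exact lt_of_le_of_lt (jointP_le_one _ _ _ _ _ _ _ _) ENNReal.one_lt_top
  -- H0 ≥ N0, H1 ≥ N1
  have hle : ∀ (u : ℕ) (aa : Fin u → A) (oo : Fin u → O) (ss : Fin (u + 1) → S),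
      (∑ D : 𝔇, jointP p𝔇 p₀ dyn u D ss aa oo) ≤ histP p𝔇 p₀ dyn u aa oo := by
    intro u aa oo ss
    refine Finset.sum_le_sum fun D _ => ?_
    exact Finset.single_le_sum (f := fun s => jointP p𝔇 p₀ dyn u D s aa oo)
      (fun _ _ => zero_le) (Finset.mem_univ ss)
  have hH0ne : H0 ≠ 0 := fun h0 => hN0ne (le_antisymm (h0 ▸ hle t a' o' seq) (zero_le))
  have hH1ne : H1 ≠ 0 := fun h0 => hH (le_antisymm (h0 ▸ hle (t + 1) a o (Fin.snoc seq s')) (zero_le))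
  have hH0top : H0 ≠ ⊤ := hsumlt t a' o'
  -- rewrite predBRL's snoc'ed actions/observations
  have hsa : (Fin.snoc a' (a (Fin.last t)) : Fin (t + 1) → A) = a := Fin.snoc_init_self a
  have hso : (Fin.snoc o' (o (Fin.last t)) : Fin (t + 1) → O) = o := Fin.snoc_init_self o
  unfold seqPost predBRL
  rw [hsa, hso]
  exact ennreal_div_arith N1 H1 N0 H0 hN0ne hN0top hH0ne hH0top hH1ne
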